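/- Let p > 1, q > 0, m > 1, χ ∈ ℝ, and let w be the homoclinic solution of the core problem. Suppose that for some c ≠ 0 and α ∈ ℝ the function φ = c·w + α·w' satisfies the scalar NLEP with λ = 0: φ'' − φ + p w^{p−1} φ − mq·χ·w^p·(∫_ℝ w^{m−1}φ dy)/(∫_ℝ w^m dy) = 0. Then χ = (p−1)/(mq); equivalently, the zero-eigenvalue crossing condition 𝓐(0) = 1/χ(0) − mq/(p−1) = 0 holds. -/

import Mathlib

open MeasureTheory Real Filter

/-- The homoclinic solution of the core problem `w'' - w + w^p = 0`. -/
noncomputable def w (p : ℝ) (y : ℝ) : ℝ :=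
  ((p + 1) / 2) ^ (1 / (p - 1)) * (1 / Real.cosh ((p - 1) * y / 2)) ^ (2 / (p - 1))

lemma w_pos {p : ℝ} (hp : 1 < p) (y : ℝ) : 0 < w p y := by
  unfold w
  have h1 : (0:ℝ) < (p+1)/2 := by linarith
  have h2 : (0:ℝ) < 1 / Real.cosh ((p-1)*y/2) := by positivity
  exact mul_pos (Real.rpow_pos_of_pos h1 _) (Real.rpow_pos_of_pos h2 _)

lemma hasDerivAt_w {p : ℝ} (hp : 1 < p) (y : ℝ) :
    HasDerivAt (w p)
      (-(Real.sinh ((p-1)*y/2) / Real.cosh ((p-1)*y/2)) * w p y) y := by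
  have hcoshpos : ∀ x : ℝ, (0:ℝ) < Real.cosh x := fun x => Real.cosh_pos x
  have hne : p - 1 ≠ 0 := by linarith
  have hb : HasDerivAt (fun y : ℝ => (p-1)*y/2) ((p-1)/2) y := by
    simpa using ((hasDerivAt_id y).const_mul (p-1)).div_const 2
  have hcosh : HasDerivAt (fun y : ℝ => Real.cosh ((p-1)*y/2))
      (Real.sinh ((p-1)*y/2) * ((p-1)/2)) y := (Real.hasDerivAt_cosh _).comp y hb
  have hinv : HasDerivAt (fun y : ℝ => 1 / Real.cosh ((p-1)*y/2))
      (-(Real.sinh ((p-1)*y/2) * ((p-1)/2)) / (Real.cosh ((p-1)*y/2))^2) y := by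
    simpa [one_div] using hcosh.fun_inv (hcoshpos _).ne'
  have hs : (0:ℝ) < 1 / Real.cosh ((p-1)*y/2) := by positivity
  have hr : HasDerivAt (fun y : ℝ => (1 / Real.cosh ((p-1)*y/2)) ^ (2/(p-1)))
      ((-(Real.sinh ((p-1)*y/2) * ((p-1)/2)) / (Real.cosh ((p-1)*y/2))^2) *
        (2/(p-1)) * (1 / Real.cosh ((p-1)*y/2)) ^ (2/(p-1) - 1)) y :=
    hinv.rpow_const (Or.inl hs.ne')
  have := hr.const_mul (((p + 1) / 2) ^ (1 / (p - 1)) : ℝ)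
  refine this.congr_deriv (Eq.symm ?_)
  rw [Real.rpow_sub hs, Real.rpow_one]
  unfold w
  have hc := (hcoshpos ((p-1)*y/2)).ne'
  field_simp

lemma w_rpow_pm1 {p : ℝ} (hp : 1 < p) (y : ℝ) :
    (w p y) ^ (p-1) = (p+1)/2 * (1 / Real.cosh ((p-1)*y/2))^(2:ℕ) := by
  unfold w
  have h1 : (0:ℝ) < (p+1)/2 := by linarith
  have h2 : (0:ℝ) < 1 / Real.cosh ((p-1)*y/2) := by positivity
  have hne : p - 1 ≠ 0 := by linarith
  rw [Real.mul_rpow (Real.rpow_pos_of_pos h1 _).le (Real.rpow_pos_of_pos h2 _).le,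
    ← Real.rpow_mul h1.le, ← Real.rpow_mul h2.le,
    show (1/(p-1))*(p-1) = 1 by field_simp, show (2/(p-1))*(p-1) = 2 by field_simp,
    Real.rpow_one, show (2:ℝ) = ((2:ℕ):ℝ) by norm_num, Real.rpow_natCast]

lemma w_rpow_succ {p : ℝ} (hp : 1 < p) (y : ℝ) (a : ℝ) :
    (w p y) ^ (a - 1) * w p y = (w p y) ^ a := by
  rw [Real.rpow_sub (w_pos hp y), Real.rpow_one, div_mul_cancel₀ _ (w_pos hp y).ne']

lemma deriv_w {p : ℝ} (hp : 1 < p) :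
    deriv (w p) = fun y => -(Real.sinh ((p-1)*y/2) / Real.cosh ((p-1)*y/2)) * w p y :=
  funext fun y => (hasDerivAt_w hp y).deriv

lemma hasDerivAt_deriv_w {p : ℝ} (hp : 1 < p) (y : ℝ) :
    HasDerivAt (deriv (w p)) (w p y - (w p y) ^ p) y := by
  rw [deriv_w hp]
  have hb : HasDerivAt (fun y : ℝ => (p-1)*y/2) ((p-1)/2) y := by
    simpa using ((hasDerivAt_id y).const_mul (p-1)).div_const 2
  have hcosh : HasDerivAt (fun y : ℝ => Real.cosh ((p-1)*y/2))
      (Real.sinh ((p-1)*y/2) * ((p-1)/2)) y := (Real.hasDerivAt_cosh _).comp y hb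
  have hsinh : HasDerivAt (fun y : ℝ => Real.sinh ((p-1)*y/2))
      (Real.cosh ((p-1)*y/2) * ((p-1)/2)) y := (Real.hasDerivAt_sinh _).comp y hb
  have hc : (0:ℝ) < Real.cosh ((p-1)*y/2) := Real.cosh_pos _
  have hdiv := (hsinh.div hcosh hc.ne').neg
  have hprod := hdiv.mul (hasDerivAt_w hp y)
  refine hprod.congr_deriv (Eq.symm ?_)
  rw [← w_rpow_succ hp y p, w_rpow_pm1 hp y]
  have hident : Real.cosh ((p-1)*y/2)^2 - Real.sinh ((p-1)*y/2)^2 = 1 :=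
    Real.cosh_sq_sub_sinh_sq _
  simp only [Pi.neg_apply, Pi.div_apply]
  field_simp
  linear_combination ((p+1)* w p y) * hident

lemma deriv_deriv_w {p : ℝ} (hp : 1 < p) :
    deriv (deriv (w p)) = fun y => w p y - (w p y) ^ p :=
  funext fun y => (hasDerivAt_deriv_w hp y).deriv

lemma hasDerivAt_deriv_deriv_w {p : ℝ} (hp : 1 < p) (y : ℝ) :
    HasDerivAt (deriv (deriv (w p)))
      (deriv (w p) y - p * (w p y) ^ (p-1) * deriv (w p) y) y := by
  rw [deriv_deriv_w hp]
  have h1 := hasDerivAt_w hp y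
  have h2 := h1.rpow_const (p := p) (Or.inl (w_pos hp y).ne')
  have h3 := h1.sub h2
  refine h3.congr_deriv (Eq.symm ?_)
  rw [(hasDerivAt_w hp y).deriv]
  ring

lemma w_even {p : ℝ} (y : ℝ) : w p (-y) = w p y := by
  unfold w
  rw [show (p-1)*(-y)/2 = -((p-1)*y/2) by ring, Real.cosh_neg]

lemma abs_sinh_lt_cosh (x : ℝ) : |Real.sinh x| < Real.cosh x := by
  have h := Real.cosh_sq_sub_sinh_sq x
  have h2 := Real.cosh_pos x
  nlinarith [sq_abs (Real.sinh x), abs_nonneg (Real.sinh x)]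


/-- Zero-eigenvalue crossing: if `φ = c w + α w'` solves the scalar NLEP with
`λ = 0` and multiplier `χ`, then `χ = (p-1)/(mq)`, i.e. `𝓐(0) = 0`. -/
theorem zero_eigenvalue_crossing (p q m : ℝ) (hp : 1 < p) (hq : 0 < q) (hm : 1 < m)
    (χ : ℝ) (c α : ℝ) (hc : c ≠ 0)
    (φ : ℝ → ℝ) (hφ : φ = fun y => c * w p y + α * deriv (w p) y)
    (hNLEP : ∀ y : ℝ,
      deriv (deriv φ) y - φ y + p * (w p y) ^ (p - 1) * φ y -
        m * q * χ * (w p y) ^ p *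
          (∫ t : ℝ, (w p t) ^ (m - 1) * φ t) / (∫ t : ℝ, (w p t) ^ m)
        = 0) :
    χ = (p - 1) / (m * q) := by
  set N : ℝ := ∫ t : ℝ, (w p t) ^ (m - 1) * φ t with hNdef
  set J : ℝ := ∫ t : ℝ, (w p t) ^ m with hJdef
  -- first derivative of φ
  have hφ' : deriv φ = fun y => c * deriv (w p) y + α * deriv (deriv (w p)) y := by
    funext y
    rw [hφ]
    have h := ((hasDerivAt_w hp y).const_mul c).fun_add ((hasDerivAt_deriv_w hp y).const_mul α)
    rw [h.deriv, (hasDerivAt_w hp y).deriv, (hasDerivAt_deriv_w hp y).deriv]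
  have hφ'' : ∀ y, deriv (deriv φ) y =
      c * (w p y - (w p y) ^ p) +
        α * (deriv (w p) y - p * (w p y) ^ (p-1) * deriv (w p) y) := by
    intro y
    rw [hφ']
    exact (((hasDerivAt_deriv_w hp y).const_mul c).add
      ((hasDerivAt_deriv_deriv_w hp y).const_mul α)).deriv
  -- pointwise identity
  have hA : ∀ y, c * (p-1) * (w p y) ^ p = m * q * χ * (w p y) ^ p * N / J := by
    intro y
    have h := hNLEP y
    rw [hφ'' y] at h
    simp only [hφ] at h
    have hWW := w_rpow_succ hp y p
    linear_combination h - p * c * hWW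
  -- evaluate at 0
  have hW : ((w p 0):ℝ) ^ p ≠ 0 := (Real.rpow_pos_of_pos (w_pos hp 0) p).ne'
  have key : c * (p-1) = m * q * χ * N / J := by
    apply mul_right_cancel₀ hW
    linear_combination hA 0
  -- J ≠ 0
  have hJ : J ≠ 0 := by
    intro h0
    rw [h0, div_zero] at key
    rcases mul_eq_zero.mp key with h | h
    · exact hc h
    · linarith
  have hint : Integrable (fun t : ℝ => (w p t) ^ m) := by
    by_contra hni
    exact hJ (integral_undef hni)
  -- the odd part
  set g : ℝ → ℝ := fun t =>
    -(Real.sinh ((p-1)*t/2) / Real.cosh ((p-1)*t/2)) * (w p t) ^ m with hgdef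
  have hlin : Continuous fun t : ℝ => (p-1)*t/2 := by continuity
  have hgint : Integrable g := by
    apply hint.bdd_mul (c := 1)
    · exact (((Real.continuous_sinh.comp hlin).div (Real.continuous_cosh.comp hlin)
        (fun x => (Real.cosh_pos _).ne')).neg).aestronglyMeasurable
    · refine ae_of_all _ (fun x => ?_)
      rw [norm_neg, norm_div, Real.norm_eq_abs, Real.norm_eq_abs,
        abs_of_pos (Real.cosh_pos _), div_le_one (Real.cosh_pos _)]
      exact (abs_sinh_lt_cosh _).le
  have hgzero : ∫ t, g t = 0 := by
    have hodd : ∀ t, g (-t) = -g t := by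
      intro t
      simp only [hgdef]
      rw [show (p-1)*(-t)/2 = -((p-1)*t/2) by ring, Real.sinh_neg, Real.cosh_neg, w_even]
      ring
    have h1 : ∫ t : ℝ, g (-t) = ∫ t, g t := integral_neg_eq_self g volume
    have h2 : ∫ t : ℝ, g (-t) = -∫ t, g t := by
      simp_rw [hodd]
      exact integral_neg g
    linarith [h1, h2]
  have hN : N = c * J := by
    rw [hNdef, hJdef]
    have hwm : (fun t => (w p t) ^ (m-1) * φ t) =
        fun t => c * (w p t) ^ m + α * g t := by
      funext t
      rw [hφ]
      simp only [hgdef]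
      rw [(hasDerivAt_w hp t).deriv, ← w_rpow_succ hp t m]
      ring
    rw [hwm, integral_add (hint.const_mul c) (hgint.const_mul α),
      integral_const_mul, integral_const_mul, hgzero]
    ring
  rw [hN] at key
  have hmq : m * q ≠ 0 := by positivity
  have key2 : p - 1 = m * q * χ := by
    have h3 : c * (p-1) * J = m * q * χ * (c * J) := by
      rw [key]; field_simp
    have h4 : (c * J) * (p-1) = (c * J) * (m * q * χ) := by linear_combination h3
    exact mul_left_cancel₀ (mul_ne_zero hc hJ) h4
  rw [key2]
  exact (mul_div_cancel_left₀ χ hmq).symm
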